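/- Let x ∈ c_00(ℕ) and let I_1 < I_2 < ⋯ < I_p be successive intervals of ℕ. If φ = (1/w) Σ_{l=1}^d φ_l with φ_1 < ⋯ < φ_d successive elements of a norming set K that is closed under restriction to intervals, and α = (1/m) Σ_{i=1}^p ‖I_i x‖ where ‖·‖ is the norm induced by K, then |φ((1/m) Σ_{i=1}^p I_i x)| ≤ (d/m)·‖x‖ + (1/w)·α. -/

import Mathlib

/-- The action `f(x) = Σ_a f(e_a) x(e_a)` of a functional on a vector. -/
def pair (f x : ℕ →₀ ℝ) : ℝ := ∑ a ∈ f.support, f a * x a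

/-- The norm induced by a norming set `K` on `c₀₀(ℕ)`. -/
noncomputable def normK (K : Set (ℕ →₀ ℝ)) (x : ℕ →₀ ℝ) : ℝ :=
  sSup {r | ∃ f ∈ K, r = pair f x}

lemma pair_eq_sum (f x : ℕ →₀ ℝ) {s : Finset ℕ} (hs : f.support ⊆ s) :
    pair f x = ∑ a ∈ s, f a * x a :=
  Finset.sum_subset hs (fun a _ ha => by
    simp [Finsupp.notMem_support_iff.mp ha])

lemma pair_smul_left (c : ℝ) (f x : ℕ →₀ ℝ) : pair (c • f) x = c * pair f x := by
  rw [pair_eq_sum (c • f) x (Finsupp.support_smul (b := c) (g := f)), pair, Finset.mul_sum]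
  exact Finset.sum_congr rfl fun a _ => by simp [mul_assoc]

lemma pair_smul_right (c : ℝ) (f x : ℕ →₀ ℝ) : pair f (c • x) = c * pair f x := by
  unfold pair
  rw [Finset.mul_sum]
  exact Finset.sum_congr rfl fun a _ => by simp; ring

lemma pair_neg_left (f x : ℕ →₀ ℝ) : pair (-f) x = -pair f x := by
  rw [← neg_one_smul ℝ f, pair_smul_left]; ring

lemma pair_sum_right {ι : Type*} (s : Finset ι) (f : ℕ →₀ ℝ) (x : ι → (ℕ →₀ ℝ)) :
    pair f (∑ i ∈ s, x i) = ∑ i ∈ s, pair f (x i) := by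
  unfold pair
  rw [Finset.sum_comm]
  exact Finset.sum_congr rfl fun a _ => by
    rw [Finsupp.finset_sum_apply, Finset.mul_sum]

lemma pair_sum_left {ι : Type*} (s : Finset ι) (f : ι → (ℕ →₀ ℝ)) (x : ℕ →₀ ℝ) :
    pair (∑ i ∈ s, f i) x = ∑ i ∈ s, pair (f i) x := by
  classical
  have hsub : (∑ i ∈ s, f i).support ⊆ s.biUnion (fun i => (f i).support) :=
    Finsupp.support_finset_sum
  rw [pair_eq_sum _ x hsub]
  have : ∀ i ∈ s, pair (f i) x = ∑ a ∈ s.biUnion (fun i => (f i).support), f i a * x a :=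
    fun i hi => pair_eq_sum _ x (fun a ha => Finset.mem_biUnion.2 ⟨i, hi, ha⟩)
  rw [Finset.sum_congr rfl this, Finset.sum_comm]
  exact Finset.sum_congr rfl fun a _ => by
    rw [Finsupp.finset_sum_apply, Finset.sum_mul]

lemma pair_filter (f x : ℕ →₀ ℝ) (p : ℕ → Prop) [DecidablePred p] :
    pair f (x.filter p) = pair (f.filter p) x := by
  rw [pair_eq_sum (f.filter p) x (fun a ha => (Finset.mem_filter.mp ha).1)]
  unfold pair
  exact Finset.sum_congr rfl fun a _ => by
    simp only [Finsupp.filter_apply]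
    split <;> simp

lemma pair_le_normK {K : Set (ℕ →₀ ℝ)} (hbdd : ∀ x : ℕ →₀ ℝ, BddAbove {r | ∃ f ∈ K, r = pair f x})
    {f : ℕ →₀ ℝ} (hf : f ∈ K) (x : ℕ →₀ ℝ) : pair f x ≤ normK K x :=
  le_csSup (hbdd x) ⟨f, hf, rfl⟩

lemma abs_pair_le_normK {K : Set (ℕ →₀ ℝ)}
    (hsym : ∀ f ∈ K, -f ∈ K)
    (hbdd : ∀ x : ℕ →₀ ℝ, BddAbove {r | ∃ f ∈ K, r = pair f x})
    {f : ℕ →₀ ℝ} (hf : f ∈ K) (x : ℕ →₀ ℝ) : |pair f x| ≤ normK K x := by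
  have h1 := pair_le_normK hbdd hf x
  have h2 := pair_le_normK hbdd (hsym f hf) x
  rw [pair_neg_left] at h2
  exact abs_le.2 ⟨by linarith, h1⟩

lemma normK_nonneg {K : Set (ℕ →₀ ℝ)}
    (hbasis : ∀ r : ℕ, Finsupp.single r (1 : ℝ) ∈ K)
    (hsym : ∀ f ∈ K, -f ∈ K)
    (hbdd : ∀ x : ℕ →₀ ℝ, BddAbove {r | ∃ f ∈ K, r = pair f x})
    (x : ℕ →₀ ℝ) : 0 ≤ normK K x := by
  have := abs_pair_le_normK hsym hbdd (hbasis 0) x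
  exact le_trans (abs_nonneg _) this

lemma normK_filter_le {K : Set (ℕ →₀ ℝ)}
    (hbasis : ∀ r : ℕ, Finsupp.single r (1 : ℝ) ∈ K)
    (hrestr : ∀ f ∈ K, ∀ a b : ℕ, f.filter (· ∈ Finset.Icc a b) ∈ K)
    (hbdd : ∀ x : ℕ →₀ ℝ, BddAbove {r | ∃ f ∈ K, r = pair f x})
    (x : ℕ →₀ ℝ) (a b : ℕ) :
    normK K (x.filter (· ∈ Finset.Icc a b)) ≤ normK K x := by
  have hne : {r | ∃ f ∈ K, r = pair f (x.filter (· ∈ Finset.Icc a b))}.Nonempty :=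
    ⟨_, ⟨Finsupp.single 0 1, hbasis 0, rfl⟩⟩
  apply csSup_le hne
  rintro r ⟨f, hf, rfl⟩
  rw [pair_filter]
  exact pair_le_normK hbdd (hrestr f hf a b) x
/-- splitting estimate: Let `K ⊂ c₀₀(ℕ)` be a norming set
(symmetric, containing `{±e_k*}`, closed under restriction to intervals, and
inducing a genuine norm, i.e. the relevant sets of values are bounded above).
Let `x ∈ c₀₀(ℕ)` and `I_1 < ⋯ < I_p` successive intervals of `ℕ`.  If
`φ = (1/w) Σ_{l=1}^d φ_l` with `φ_1 < ⋯ < φ_d` successive elements of `K`, and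
`α = (1/m) Σ_{i=1}^p ‖I_i x‖`, then
`|φ((1/m) Σ_{i=1}^p I_i x)| ≤ (d/m) ‖x‖ + (1/w) α`. -/
theorem stmt13 (K : Set (ℕ →₀ ℝ))
    (hbasis : ∀ r : ℕ, Finsupp.single r (1 : ℝ) ∈ K)
    (hsym : ∀ f ∈ K, -f ∈ K)
    (hrestr : ∀ f ∈ K, ∀ a b : ℕ, f.filter (· ∈ Finset.Icc a b) ∈ K)
    (hbdd : ∀ x : ℕ →₀ ℝ, BddAbove {r | ∃ f ∈ K, r = pair f x})
    (w m : ℝ) (hw : 1 ≤ w) (hm : 0 < m)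
    (d : ℕ) (φl : Fin d → (ℕ →₀ ℝ)) (hφl : ∀ l, φl l ∈ K)
    (hφsucc : ∀ l l' : Fin d, l < l' →
      ∀ a ∈ (φl l).support, ∀ b ∈ (φl l').support, a < b)
    (φ : ℕ →₀ ℝ) (hφ : φ = w⁻¹ • ∑ l, φl l)
    (p : ℕ) (I : Fin p → Finset ℕ)
    (hI : ∀ i, ∃ a b, I i = Finset.Icc a b)
    (hIsucc : ∀ i i' : Fin p, i < i' → ∀ a ∈ I i, ∀ b ∈ I i', a < b)
    (x : ℕ →₀ ℝ)
    (α : ℝ) (hα : α = m⁻¹ * ∑ i : Fin p, normK K (x.filter (· ∈ I i))) :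
    |pair φ (m⁻¹ • ∑ i : Fin p, x.filter (· ∈ I i))| ≤
      ((d : ℝ) / m) * normK K x + w⁻¹ * α := by
  classical
  set xi : Fin p → (ℕ →₀ ℝ) := fun i => x.filter (· ∈ I i) with hxi
  -- basic norm facts
  have hxnn : 0 ≤ normK K x := normK_nonneg hbasis hsym hbdd x
  have hxinn : ∀ i, 0 ≤ normK K (xi i) := fun i => normK_nonneg hbasis hsym hbdd _
  have hxile : ∀ i, normK K (xi i) ≤ normK K x := by
    intro i
    obtain ⟨a, b, hab⟩ := hI i
    have : xi i = x.filter (· ∈ Finset.Icc a b) := by rw [hxi]; simp only [hab]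
    rw [this]
    exact normK_filter_le hbasis hrestr hbdd x a b
  have habs : ∀ (l : Fin d) (i : Fin p), |pair (φl l) (xi i)| ≤ normK K (xi i) :=
    fun l i => abs_pair_le_normK hsym hbdd (hφl l) (xi i)
  -- expansion
  have hexp : pair φ (m⁻¹ • ∑ i : Fin p, xi i)
      = w⁻¹ * (m⁻¹ * ∑ q ∈ (Finset.univ ×ˢ Finset.univ : Finset (Fin p × Fin d)),
          pair (φl q.2) (xi q.1)) := by
    rw [hφ, pair_smul_left, pair_smul_right, pair_sum_right]
    congr 2
    rw [Finset.sum_product]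
    exact Finset.sum_congr rfl fun i _ => pair_sum_left _ _ _
  -- incidence
  set inc : Fin p × Fin d → Prop := fun q => ∃ a, a ∈ (φl q.2).support ∧ a ∈ (xi q.1).support
    with hinc
  have hzero : ∀ q : Fin p × Fin d, ¬ inc q → pair (φl q.2) (xi q.1) = 0 := by
    intro q hq
    apply Finset.sum_eq_zero
    intro a ha
    have : a ∉ (xi q.1).support := fun h => hq ⟨a, ha, h⟩
    rw [Finsupp.notMem_support_iff.mp this, mul_zero]
  have hsuppI : ∀ i, (xi i).support ⊆ I i := by
    intro i a ha
    rw [hxi] at ha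
    exact (Finset.mem_filter.mp ha).2
  -- staircase property
  have hstair : ∀ q q' : Fin p × Fin d, inc q → inc q' → q.1 < q'.1 → q.2 ≤ q'.2 := by
    rintro q q' ⟨a, ha1, ha2⟩ ⟨b, hb1, hb2⟩ hii
    by_contra hll
    push_neg at hll
    have h1 : a < b := hIsucc q.1 q'.1 hii a (hsuppI _ ha2) b (hsuppI _ hb2)
    have h2 : b < a := hφsucc q'.2 q.2 hll b hb1 a ha1
    omega
  set isMin : Fin p × Fin d → Prop := fun q => inc q ∧ ∀ l', inc (q.1, l') → q.2 ≤ l'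
    with hisMin
  set P : Finset (Fin p × Fin d) := Finset.univ ×ˢ Finset.univ with hP
  set F : Finset (Fin p × Fin d) := P.filter isMin with hF
  set N : Finset (Fin p × Fin d) := P.filter (fun q => inc q ∧ ¬ isMin q) with hN
  have hNsub : N ⊆ P.filter (fun q => ¬ isMin q) :=
    fun q hq => Finset.mem_filter.mpr ⟨(Finset.mem_filter.mp hq).1,
      (Finset.mem_filter.mp hq).2.2⟩
  have hsplit : ∑ q ∈ P, pair (φl q.2) (xi q.1)
      = ∑ q ∈ F, pair (φl q.2) (xi q.1) + ∑ q ∈ N, pair (φl q.2) (xi q.1) := by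
    rw [← Finset.sum_filter_add_sum_filter_not P isMin, ← hF]
    congr 1
    refine (Finset.sum_subset hNsub ?_).symm
    intro q hq hqn
    refine hzero q fun h => hqn ?_
    rw [hN]
    exact Finset.mem_filter.mpr ⟨(Finset.mem_filter.mp hq).1,
      h, (Finset.mem_filter.mp hq).2⟩
  -- bound on F part
  have hFbound : |∑ q ∈ F, pair (φl q.2) (xi q.1)| ≤ ∑ i : Fin p, normK K (xi i) := by
    calc |∑ q ∈ F, pair (φl q.2) (xi q.1)|
        ≤ ∑ q ∈ F, |pair (φl q.2) (xi q.1)| := Finset.abs_sum_le_sum_abs _ _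
      _ ≤ ∑ q ∈ F, normK K (xi q.1) := Finset.sum_le_sum fun q _ => habs q.2 q.1
      _ = ∑ i ∈ F.image Prod.fst, normK K (xi i) := by
          refine (Finset.sum_image (g := Prod.fst) (f := fun i => normK K (xi i)) ?_).symm
          intro q hq q' hq' hfst
          have h1 := (Finset.mem_filter.mp hq).2
          have h2 := (Finset.mem_filter.mp hq').2
          have e1 : q.2 ≤ q'.2 := h1.2 q'.2 (by rw [hfst]; exact h2.1)
          have e2 : q'.2 ≤ q.2 := h2.2 q.2 (by rw [← hfst]; exact h1.1)
          exact Prod.ext hfst (le_antisymm e1 e2)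
      _ ≤ ∑ i : Fin p, normK K (xi i) :=
          Finset.sum_le_sum_of_subset_of_nonneg (Finset.subset_univ _)
            (fun i _ _ => hxinn i)
  -- bound on N part
  have hNcard : N.card ≤ d := by
    have : N.card ≤ (Finset.univ : Finset (Fin d)).card := by
      apply Finset.card_le_card_of_injOn Prod.snd (fun q _ => Finset.mem_univ _)
      intro q hq q' hq' hsnd
      have h1 := (Finset.mem_filter.mp hq).2
      have h2 := (Finset.mem_filter.mp hq').2
      obtain ⟨l1, hl1, hl1n⟩ : ∃ l', inc (q.1, l') ∧ ¬ q.2 ≤ l' := by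
        by_contra hc; push_neg at hc
        exact h1.2 ⟨h1.1, fun l' hl' => hc l' hl'⟩
      obtain ⟨l2, hl2, hl2n⟩ : ∃ l', inc (q'.1, l') ∧ ¬ q'.2 ≤ l' := by
        by_contra hc; push_neg at hc
        exact h2.2 ⟨h2.1, fun l' hl' => hc l' hl'⟩
      refine Prod.ext ?_ hsnd
      rcases lt_trichotomy q.1 q'.1 with h | h | h
      · have := hstair q (q'.1, l2) h1.1 hl2 h
        rw [hsnd] at this
        exact absurd this hl2n
      · exact h
      · have := hstair q' (q.1, l1) h2.1 hl1 h
        rw [← hsnd] at this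
        exact absurd this hl1n
    simpa using this
  have hNbound : |∑ q ∈ N, pair (φl q.2) (xi q.1)| ≤ (d : ℝ) * normK K x := by
    calc |∑ q ∈ N, pair (φl q.2) (xi q.1)|
        ≤ ∑ q ∈ N, |pair (φl q.2) (xi q.1)| := Finset.abs_sum_le_sum_abs _ _
      _ ≤ ∑ q ∈ N, normK K x := Finset.sum_le_sum fun q _ =>
          le_trans (habs q.2 q.1) (hxile q.1)
      _ = N.card * normK K x := by rw [Finset.sum_const, nsmul_eq_mul]
      _ ≤ (d : ℝ) * normK K x := by
          apply mul_le_mul_of_nonneg_right _ hxnn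
          exact_mod_cast hNcard
  -- put together
  have hwpos : (0:ℝ) < w := lt_of_lt_of_le one_pos hw
  have hwinv : w⁻¹ ≤ 1 := by
    rw [inv_le_one_iff₀]; right; exact hw
  have hwinvnn : (0:ℝ) ≤ w⁻¹ := inv_nonneg.mpr (le_of_lt hwpos)
  have hminvnn : (0:ℝ) ≤ m⁻¹ := inv_nonneg.mpr (le_of_lt hm)
  rw [hexp, hsplit, abs_mul, abs_mul, abs_of_nonneg hwinvnn, abs_of_nonneg hminvnn]
  have habs2 : |∑ q ∈ F, pair (φl q.2) (xi q.1) + ∑ q ∈ N, pair (φl q.2) (xi q.1)|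
      ≤ (∑ i : Fin p, normK K (xi i)) + (d : ℝ) * normK K x :=
    le_trans (abs_add_le _ _) (add_le_add hFbound hNbound)
  calc w⁻¹ * (m⁻¹ * |∑ q ∈ F, pair (φl q.2) (xi q.1) + ∑ q ∈ N, pair (φl q.2) (xi q.1)|)
      ≤ w⁻¹ * (m⁻¹ * ((∑ i : Fin p, normK K (xi i)) + (d : ℝ) * normK K x)) := by
        apply mul_le_mul_of_nonneg_left _ hwinvnn
        exact mul_le_mul_of_nonneg_left habs2 hminvnn
    _ = w⁻¹ * (m⁻¹ * (d : ℝ) * normK K x) + w⁻¹ * α := by rw [hα]; ring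
    _ ≤ ((d : ℝ) / m) * normK K x + w⁻¹ * α := by
        apply add_le_add_left
        rw [div_eq_inv_mul]
        calc w⁻¹ * (m⁻¹ * (d : ℝ) * normK K x) ≤ 1 * (m⁻¹ * (d : ℝ) * normK K x) := by
              apply mul_le_mul_of_nonneg_right hwinv
              positivity
          _ = m⁻¹ * (d : ℝ) * normK K x := one_mul _
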